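/- Let S = {x : h(x) ≥ 0} be compact with h C¹, ∇h locally Lipschitz, ∇h ≠ 0 on {h = 0}, and f : ℝᵐ × ℝⁿ → ℝⁿ locally Lipschitz. Then the CBF vector field (z,x) ↦ f_cbf,α(z,x) is locally Lipschitz on ℝᵐ × U for any open set U on which ∇h ≠ 0 wherever the min-term is active; in particular f_cbf,α is continuous wherever ∇h(x) ≠ 0 or ∇h(x)ᵀf(z,x) + α h(x) > 0. -/

import Mathlib

open Metric Set Filter
open scoped RealInnerProductSpace Topology NNReal

private lemma maxinv_lipschitz {c : ℝ} (hc : 0 < c) :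
    LipschitzWith ⟨(c * c)⁻¹, by positivity⟩ (fun t : ℝ => (max c t)⁻¹) := by
  apply LipschitzWith.of_dist_le_mul
  intro x y
  have hx : c ≤ max c x := le_max_left _ _
  have hy : c ≤ max c y := le_max_left _ _
  have hx0 : 0 < max c x := lt_of_lt_of_le hc hx
  have hy0 : 0 < max c y := lt_of_lt_of_le hc hy
  rw [Real.dist_eq, Real.dist_eq]
  have h1 : (max c x)⁻¹ - (max c y)⁻¹ = (max c y - max c x) / (max c x * max c y) := by
    field_simp
  rw [h1, abs_div]
  have h2 : |max c y - max c x| ≤ |x - y| := by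
    rw [max_comm c y, max_comm c x, abs_sub_comm x y]
    exact abs_max_sub_max_le_abs y x c
  have h3 : c * c ≤ |max c x * max c y| := by
    rw [abs_of_pos (mul_pos hx0 hy0)]
    exact mul_le_mul hx hy hc.le hx0.le
  have h4 : (0:ℝ) < c * c := by positivity
  have h5 : |max c y - max c x| / |max c x * max c y| ≤ |x - y| / (c * c) :=
    div_le_div₀ (abs_nonneg _) h2 h4 h3
  refine h5.trans (le_of_eq ?_)
  rw [div_eq_inv_mul]
  rfl


set_option maxHeartbeats 1000000 in
private lemma ll_inner {X : Type*} [PseudoEMetricSpace X] {k : ℕ}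
    {u v : X → EuclideanSpace ℝ (Fin k)}
    (hu : LocallyLipschitz u) (hv : LocallyLipschitz v) :
    LocallyLipschitz fun x => ⟪u x, v x⟫ :=
  ((contDiff_fst.inner ℝ contDiff_snd).locallyLipschitz).comp (hu.prodMk hv)

set_option maxHeartbeats 1000000 in
private lemma ll_smul {X : Type*} [PseudoEMetricSpace X] {k : ℕ}
    {u : X → ℝ} {v : X → EuclideanSpace ℝ (Fin k)}
    (hu : LocallyLipschitz u) (hv : LocallyLipschitz v) :
    LocallyLipschitz fun x => u x • v x :=
  ((contDiff_fst.smul (𝕜 := ℝ) contDiff_snd).locallyLipschitz).comp (hu.prodMk hv)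

set_option maxHeartbeats 1000000 in
private lemma ll_mul {X : Type*} [PseudoEMetricSpace X]
    {u v : X → ℝ} (hu : LocallyLipschitz u) (hv : LocallyLipschitz v) :
    LocallyLipschitz fun x => u x * v x :=
  (((contDiff_fst.mul contDiff_snd : ContDiff ℝ 1
      (fun r : ℝ × ℝ => r.1 * r.2))).locallyLipschitz).comp (hu.prodMk hv)

set_option maxHeartbeats 4000000 in
/-- local Lipschitz continuity / continuity of the CBF vector
field where the gradient is nonzero or the CBF constraint is strictly inactive. -/
theorem stmt13 {m n : ℕ}
    (f : EuclideanSpace ℝ (Fin m) → EuclideanSpace ℝ (Fin n) → EuclideanSpace ℝ (Fin n))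
    (hf : LocallyLipschitz fun p : EuclideanSpace ℝ (Fin m) × EuclideanSpace ℝ (Fin n) =>
      f p.1 p.2)
    (h : EuclideanSpace ℝ (Fin n) → ℝ) (hh : ContDiff ℝ 1 h)
    (hgradLip : LocallyLipschitz (gradient h))
    (Q : EuclideanSpace ℝ (Fin n) →L[ℝ] EuclideanSpace ℝ (Fin n))
    (hQpos : ∀ w : EuclideanSpace ℝ (Fin n), w ≠ 0 → 0 < ⟪w, Q w⟫)
    (α : ℝ) (hα : 0 < α)
    (F : EuclideanSpace ℝ (Fin m) × EuclideanSpace ℝ (Fin n) → EuclideanSpace ℝ (Fin n))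
    (hF : ∀ p, F p = f p.1 p.2 -
      (min 0 (⟪gradient h p.2, f p.1 p.2⟫ + α * h p.2) *
        (⟪gradient h p.2, Q (gradient h p.2)⟫)⁻¹) • Q (gradient h p.2))
    (U : Set (EuclideanSpace ℝ (Fin n))) (hU : IsOpen U)
    (hUgrad : ∀ x ∈ U, gradient h x ≠ 0) :
    (∀ p : EuclideanSpace ℝ (Fin m) × EuclideanSpace ℝ (Fin n), p.2 ∈ U →
      ∃ t ∈ 𝓝 p, ∃ C : ℝ≥0, LipschitzOnWith C F t) ∧
    (∀ p : EuclideanSpace ℝ (Fin m) × EuclideanSpace ℝ (Fin n),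
      (gradient h p.2 ≠ 0 ∨ 0 < ⟪gradient h p.2, f p.1 p.2⟫ + α * h p.2) →
      ContinuousAt F p) := by
  classical
  -- building blocks
  have snd_ll : LocallyLipschitz (fun p : EuclideanSpace ℝ (Fin m) × EuclideanSpace ℝ (Fin n) => p.2) :=
    (LipschitzWith.prod_snd).locallyLipschitz
  have g_ll : LocallyLipschitz (fun p : EuclideanSpace ℝ (Fin m) × EuclideanSpace ℝ (Fin n) => gradient h p.2) :=
    hgradLip.comp snd_ll
  have Qg_ll : LocallyLipschitz (fun p : EuclideanSpace ℝ (Fin m) × EuclideanSpace ℝ (Fin n) => Q (gradient h p.2)) :=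
    Q.lipschitz.locallyLipschitz.comp g_ll
  have D_ll : LocallyLipschitz (fun p : EuclideanSpace ℝ (Fin m) × EuclideanSpace ℝ (Fin n) => ⟪gradient h p.2, Q (gradient h p.2)⟫) :=
    ((contDiff_id.inner ℝ Q.contDiff).locallyLipschitz).comp g_ll
  have e_ll : LocallyLipschitz
      (fun p : EuclideanSpace ℝ (Fin m) × EuclideanSpace ℝ (Fin n) => ⟪gradient h p.2, f p.1 p.2⟫ + α * h p.2) := by
    have h1 : LocallyLipschitz (fun p : EuclideanSpace ℝ (Fin m) × EuclideanSpace ℝ (Fin n) => ⟪gradient h p.2, f p.1 p.2⟫) :=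
      ll_inner g_ll hf
    have h2 : LocallyLipschitz (fun p : EuclideanSpace ℝ (Fin m) × EuclideanSpace ℝ (Fin n) => α * h p.2) :=
      ((contDiff_const.mul hh).comp contDiff_snd).locallyLipschitz
    exact h1.add h2
  have N_ll : LocallyLipschitz
      (fun p : EuclideanSpace ℝ (Fin m) × EuclideanSpace ℝ (Fin n) => min 0 (⟪gradient h p.2, f p.1 p.2⟫ + α * h p.2)) :=
    e_ll.const_min 0
  -- key lemma
  have key : ∀ p : EuclideanSpace ℝ (Fin m) × EuclideanSpace ℝ (Fin n), gradient h p.2 ≠ 0 →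
      ∃ t ∈ 𝓝 p, ∃ C : ℝ≥0, LipschitzOnWith C F t := by
    intro p hp
    set D : EuclideanSpace ℝ (Fin m) × EuclideanSpace ℝ (Fin n) → ℝ := fun q => ⟪gradient h q.2, Q (gradient h q.2)⟫ with hD
    have hDp : 0 < D p := hQpos _ hp
    set c := D p / 2 with hcdef
    have hc0 : 0 < c := by positivity
    have hF'll : LocallyLipschitz (fun q : EuclideanSpace ℝ (Fin m) × EuclideanSpace ℝ (Fin n) =>
        f q.1 q.2 - (min 0 (⟪gradient h q.2, f q.1 q.2⟫ + α * h q.2) *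
          (max c (D q))⁻¹) • Q (gradient h q.2)) := by
      have hDinv : LocallyLipschitz (fun q : EuclideanSpace ℝ (Fin m) × EuclideanSpace ℝ (Fin n) => (max c (D q))⁻¹) :=
        (maxinv_lipschitz hc0).locallyLipschitz.comp D_ll
      exact hf.sub (ll_smul (ll_mul N_ll hDinv) Qg_ll)
    obtain ⟨K, t, ht, hK⟩ := hF'll p
    have hVopen : IsOpen (D ⁻¹' Ioi c) := isOpen_Ioi.preimage D_ll.continuous
    have hpV : p ∈ D ⁻¹' Ioi c := by
      simp only [mem_preimage, mem_Ioi, hcdef]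
      linarith
    refine ⟨t ∩ D ⁻¹' Ioi c, inter_mem ht (hVopen.mem_nhds hpV), K, ?_⟩
    have hEq : ∀ q ∈ t ∩ D ⁻¹' Ioi c,
        f q.1 q.2 - (min 0 (⟪gradient h q.2, f q.1 q.2⟫ + α * h q.2) *
          (max c (D q))⁻¹) • Q (gradient h q.2) = F q := by
      intro q hq
      rw [hF q, max_eq_right (le_of_lt hq.2)]
    intro x hx y hy
    rw [← hEq x hx, ← hEq y hy]
    exact hK.mono inter_subset_left hx hy
  constructor
  · intro p hpU
    exact key p (hUgrad _ hpU)
  · intro p hp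
    by_cases hg : gradient h p.2 ≠ 0
    · obtain ⟨t, ht, C, hC⟩ := key p hg
      exact hC.continuousOn.continuousAt ht
    · have hpos : 0 < ⟪gradient h p.2, f p.1 p.2⟫ + α * h p.2 := by
        rcases hp with hp | hp
        · exact absurd hp hg
        · exact hp
      have hEq : F =ᶠ[𝓝 p] fun q : EuclideanSpace ℝ (Fin m) × EuclideanSpace ℝ (Fin n) => f q.1 q.2 := by
        have hW : (fun q : EuclideanSpace ℝ (Fin m) × EuclideanSpace ℝ (Fin n) => ⟪gradient h q.2, f q.1 q.2⟫ + α * h q.2) ⁻¹' Ioi 0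
            ∈ 𝓝 p := by
          exact (isOpen_Ioi.preimage e_ll.continuous).mem_nhds hpos
        filter_upwards [hW] with q hq
        rw [hF q, min_eq_left (le_of_lt hq), zero_mul, zero_smul, sub_zero]
      exact (hf.continuous.continuousAt).congr hEq.symm
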